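/- arXiv:2505.15129 — 3 statements merged into one kernel-verified Lean document; each statement's English description precedes it below -/
import Mathlib

section
/- Let φ : ℝ≥0 × X → X be a continuous flow on a metric space X with a globally attracting fixed point at 0, and let Ω ⊆ X be open, containing 0, and positive-time invariant. Then Ω is exhausted by positive-time-invariant open sets with compact closure in Ω: for every compact set K ⊆ Ω there exists an open positive-time-invariant set Ω₀ with K ⊆ Ω₀ and closure(Ω₀) compact and contained in Ω. -/
open Filter Topology Metric NNReal

/-- A positive-time invariant open set `Ω ∋ 0` for a continuous semiflow with a globally
attracting fixed point at `x₀` on a locally compact metric space is exhausted by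
positive-time invariant open sets with compact closure in `Ω`. -/
theorem exhaustion_by_invariant_relatively_compact_opens
    {X : Type*} [MetricSpace X] [LocallyCompactSpace X]
    (φ : ℝ≥0 → X → X) (x₀ : X)
    (hcont : Continuous fun p : ℝ≥0 × X => φ p.1 p.2)
    (hφ0 : φ 0 = id)
    (hφadd : ∀ s t : ℝ≥0, φ (s + t) = φ s ∘ φ t)
    (hattract : ∀ z : X, Tendsto (fun t : ℝ≥0 => φ t z) atTop (𝓝 x₀))
    (hstab : ∀ ε > (0:ℝ), ∃ δ > (0:ℝ), ∀ t : ℝ≥0, ∀ z ∈ ball x₀ δ,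
      φ t z ∈ ball x₀ ε)
    (Ω : Set X) (hΩopen : IsOpen Ω) (hΩ0 : x₀ ∈ Ω)
    (hΩinv : ∀ t : ℝ≥0, φ t '' Ω ⊆ Ω) :
    ∀ K : Set X, IsCompact K → K ⊆ Ω →
      ∃ Ω₀ : Set X, IsOpen Ω₀ ∧ K ⊆ Ω₀ ∧ (∀ t : ℝ≥0, φ t '' Ω₀ ⊆ Ω₀) ∧
        IsCompact (closure Ω₀) ∧ closure Ω₀ ⊆ Ω := by
  intro K hK hKΩ
  -- continuity of each time-t map
  have hconts : ∀ t : ℝ≥0, Continuous (φ t) := fun t =>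
    hcont.comp (Continuous.prodMk_right t)
  -- "splitting" of the flow at a later time
  have hsplit : ∀ (T t : ℝ≥0), T ≤ t → ∀ w : X, φ t w = φ (t - T) (φ T w) := by
    intro T t ht w
    rw [← Function.comp_apply (f := φ (t - T)), ← hφadd, tsub_add_cancel_of_le ht]
  -- Step 1: a compact closed ball around x₀ inside Ω
  obtain ⟨L0, hL0c, hx0int, hL0Ω⟩ :=
    exists_compact_between (isCompact_singleton (x := x₀)) hΩopen (by simpa using hΩ0)
  obtain ⟨r, hr, hrball⟩ := Metric.isOpen_iff.1 isOpen_interior x₀ (by simpa using hx0int)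
  have hε : (0:ℝ) < r / 2 := by linarith
  set ε := r / 2 with hεdef
  have hcbL0 : closedBall x₀ ε ⊆ L0 := by
    refine (closedBall_subset_ball ?_).trans (hrball.trans interior_subset)
    linarith
  have hcbcomp : IsCompact (closedBall x₀ ε) :=
    IsCompact.of_isClosed_subset hL0c isClosed_closedBall hcbL0
  have hcbΩ : closedBall x₀ ε ⊆ Ω := hcbL0.trans hL0Ω
  -- Step 2: stability δ
  obtain ⟨δ, hδ, hδs⟩ := hstab ε hε
  -- for each point, a time Tz at which it enters ball x₀ δ
  have hTz : ∀ z : X, ∃ Tz : ℝ≥0, φ Tz z ∈ ball x₀ δ := fun z =>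
    ((hattract z).eventually (ball_mem_nhds x₀ hδ)).exists
  choose Tz hTzmem using hTz
  -- points in the δ-preimage stay in ball ε forever after
  have htail : ∀ (T t : ℝ≥0), T ≤ t → ∀ w ∈ (φ T) ⁻¹' (ball x₀ δ),
      φ t w ∈ ball x₀ ε := by
    intro T t ht w hw
    rw [hsplit T t ht w]
    exact hδs _ _ hw
  -- Step 3: uniform time T after which K is inside ball x₀ ε
  obtain ⟨s, -, hscover⟩ := hK.elim_nhds_subcover (fun z => (φ (Tz z)) ⁻¹' (ball x₀ δ))
    (fun z _ => ((isOpen_ball).preimage (hconts _)).mem_nhds (hTzmem z))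
  set T : ℝ≥0 := s.sup Tz with hTdef
  have hTK : ∀ z ∈ K, ∀ t : ℝ≥0, T ≤ t → φ t z ∈ ball x₀ ε := by
    intro z hz t ht
    obtain ⟨i, hi, hzi⟩ := Set.mem_iUnion₂.1 (hscover hz)
    exact htail (Tz i) t (le_trans (Finset.le_sup hi) ht) z hzi
  -- Step 4: the orbit set of K is contained in a compact Q ⊆ Ω
  set Q : Set X := ((fun p : ℝ≥0 × X => φ p.1 p.2) '' (Set.Icc 0 T ×ˢ K)) ∪
      closedBall x₀ ε with hQdef
  have hQcomp : IsCompact Q :=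
    (((isCompact_Icc).prod hK).image hcont).union hcbcomp
  have hQΩ : Q ⊆ Ω := by
    rintro w (⟨⟨t, z⟩, ⟨-, hz⟩, rfl⟩ | hw)
    · exact hΩinv t ⟨z, hKΩ hz, rfl⟩
    · exact hcbΩ hw
  -- squeeze an open V between Q and Ω with compact closure
  obtain ⟨L, hLcomp, hQint, hLΩ⟩ := exists_compact_between hQcomp hΩopen hQΩ
  set V : Set X := interior L with hVdef
  have hVopen : IsOpen V := isOpen_interior
  have hballV : ball x₀ ε ⊆ V := hQint.trans' (fun w hw => Or.inr (ball_subset_closedBall hw))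
  -- Step 5: define Ω₀
  set Ω₀ : Set X := {z | ∀ t : ℝ≥0, φ t z ∈ V} with hΩ₀def
  refine ⟨Ω₀, ?_, ?_, ?_, ?_, ?_⟩
  · -- open
    rw [isOpen_iff_forall_mem_open]
    intro z hz
    -- tube lemma on [0, Tz z]
    have hsub : Set.Icc (0:ℝ≥0) (Tz z) ×ˢ ({z} : Set X) ⊆
        (fun p : ℝ≥0 × X => φ p.1 p.2) ⁻¹' V := by
      rintro ⟨t, w⟩ ⟨-, rfl⟩
      exact hz t
    obtain ⟨u, v, huo, hvo, hIu, hzv, huv⟩ :=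
      generalized_tube_lemma isCompact_Icc isCompact_singleton
        (hVopen.preimage hcont) hsub
    refine ⟨v ∩ (φ (Tz z)) ⁻¹' (ball x₀ δ), ?_, ?_, ?_⟩
    · rintro w ⟨hwv, hwδ⟩ t
      rcases le_total t (Tz z) with hle | hle
      · exact huv (Set.mk_mem_prod (hIu ⟨zero_le, hle⟩) hwv)
      · exact hballV (htail (Tz z) t hle w hwδ)
    · exact hvo.inter ((isOpen_ball).preimage (hconts _))
    · exact ⟨hzv rfl, hTzmem z⟩
  · -- K ⊆ Ω₀
    intro z hz t
    rcases le_total t T with hle | hle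
    · exact hQint (Or.inl ⟨(t, z), ⟨⟨zero_le, hle⟩, hz⟩, rfl⟩)
    · exact hballV (hTK z hz t hle)
  · -- invariance
    rintro t w ⟨z, hz, rfl⟩ t'
    have : φ t' (φ t z) = φ (t' + t) z := by
      rw [hφadd]; rfl
    rw [this]
    exact hz (t' + t)
  · -- compact closure
    have hΩ₀V : Ω₀ ⊆ V := fun z hz => by simpa [hφ0] using hz 0
    exact IsCompact.of_isClosed_subset hLcomp isClosed_closure
      ((closure_mono hΩ₀V).trans ((closure_minimal interior_subset hLcomp.isClosed)))
  · have hΩ₀V : Ω₀ ⊆ V := fun z hz => by simpa [hφ0] using hz 0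
    exact ((closure_mono hΩ₀V).trans
      (closure_minimal interior_subset hLcomp.isClosed)).trans hLΩ
end

section
/- Let V be a complete holomorphic vector field on ℂⁿ with flow φ_t and constant divergence c (with respect to ω = dz_1 ∧ ⋯ ∧ dz_n). If V has a globally attracting fixed point at 0, then Re(c) < 0. In particular, a complete holomorphic vector field with identically zero divergence has no globally attracting fixed point. -/
open Filter Topology Metric

lemma liouville_det_hasDerivAt {n : ℕ} (M : ℝ → Matrix (Fin n) (Fin n) ℂ)
    (N : Matrix (Fin n) (Fin n) ℂ) (t₀ : ℝ)
    (h : ∀ i j, HasDerivAt (fun t => M t i j) (N i j) t₀) :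
    HasDerivAt (fun t => (M t).det) (Matrix.trace (Matrix.adjugate (M t₀) * N)) t₀ := by
  have h1 : ∀ σ : Equiv.Perm (Fin n), HasDerivAt (fun t => ∏ i, M t (σ i) i)
      (∑ i, (∏ j ∈ Finset.univ.erase i, M t₀ (σ j) j) • N (σ i) i) t₀ := fun σ =>
    HasDerivAt.fun_finsetProd (fun i _ => h (σ i) i)
  have h2 : HasDerivAt (fun t => (M t).det)
      (∑ σ : Equiv.Perm (Fin n), ((Equiv.Perm.sign σ : ℤ) : ℂ) *
        ∑ i, (∏ j ∈ Finset.univ.erase i, M t₀ (σ j) j) • N (σ i) i) t₀ := by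
    simp only [Matrix.det_apply']
    exact HasDerivAt.fun_sum fun σ _ => (h1 σ).const_mul _
  convert h2 using 1
  calc Matrix.trace (Matrix.adjugate (M t₀) * N)
      = ∑ i, Matrix.mulVec (Matrix.adjugate (M t₀)) (fun k => N k i) i := by
        simp [Matrix.trace, Matrix.diag, Matrix.mul_apply, Matrix.mulVec, dotProduct]
    _ = ∑ i, Matrix.cramer (M t₀) (fun k => N k i) i := by
        simp [Matrix.cramer_eq_adjugate_mulVec]
    _ = ∑ i, ((M t₀).updateCol i fun k => N k i).det := by
        simp [Matrix.cramer_apply]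
    _ = ∑ i, ∑ σ : Equiv.Perm (Fin n), ((Equiv.Perm.sign σ : ℤ) : ℂ) *
          (N (σ i) i * ∏ k ∈ Finset.univ.erase i, M t₀ (σ k) k) := by
        refine Finset.sum_congr rfl fun i _ => ?_
        rw [Matrix.det_apply']
        refine Finset.sum_congr rfl fun σ _ => ?_
        congr 1
        rw [← Finset.mul_prod_erase Finset.univ _ (Finset.mem_univ i)]
        congr 1
        · simp [Matrix.updateCol_apply]
        · refine Finset.prod_congr rfl fun k hk => ?_
          simp [Matrix.updateCol_apply, Finset.ne_of_mem_erase hk]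
    _ = ∑ σ : Equiv.Perm (Fin n), ((Equiv.Perm.sign σ : ℤ) : ℂ) *
          ∑ i, (∏ j ∈ Finset.univ.erase i, M t₀ (σ j) j) • N (σ i) i := by
        rw [Finset.sum_comm]
        refine Finset.sum_congr rfl fun σ _ => ?_
        rw [Finset.mul_sum]
        refine Finset.sum_congr rfl fun i _ => ?_
        simp only [smul_eq_mul]
        ring

set_option maxHeartbeats 2000000 in
/-- A complete holomorphic vector field on `ℂⁿ` (`n ≥ 1`) with constant divergence `c`
and a globally attracting fixed point at `0` must have `Re c < 0`. In particular, a
divergence-free complete holomorphic vector field has no globally attracting fixed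
point. -/
theorem re_divergence_neg_of_globally_attracting {n : ℕ} (hn : 0 < n)
    (V : (Fin n → ℂ) → (Fin n → ℂ)) (hV : Differentiable ℂ V)
    (φ : ℝ → (Fin n → ℂ) → (Fin n → ℂ))
    (hφ0 : φ 0 = id)
    (hflow : ∀ (z : Fin n → ℂ) (t : ℝ), HasDerivAt (fun s => φ s z) (V (φ t z)) t)
    (hhol : ∀ t : ℝ, Differentiable ℂ (φ t))
    (c : ℂ)
    (hdiv : ∀ z : Fin n → ℂ, (∑ j : Fin n, fderiv ℂ V z (Pi.single j 1) j) = c)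
    (hV0 : V 0 = 0)
    (hattract : ∀ z : Fin n → ℂ, Tendsto (fun t : ℝ => φ t z) atTop (𝓝 0))
    (hstab : ∀ ε > (0:ℝ), ∃ δ > (0:ℝ), ∀ t : ℝ, 0 ≤ t →
      ∀ z ∈ ball (0 : Fin n → ℂ) δ, φ t z ∈ ball (0 : Fin n → ℂ) ε) :
    c.re < 0 := by
  haveI : Nonempty (Fin n) := Fin.pos_iff_nonempty.mp hn
  obtain ⟨δ, hδ, hδball⟩ := hstab 1 one_pos
  obtain ⟨r, hr0, hrδ⟩ : ∃ r : ℝ, 0 < r ∧ r < δ := ⟨δ / 2, by positivity, by linarith⟩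
  have hnorme : ∀ j : Fin n, ‖(Pi.single j 1 : Fin n → ℂ)‖ = 1 := fun j => by
    rw [Pi.norm_single]; exact norm_one
  -- points on the circle of radius r lie in the ball of radius δ
  have hcirc : ∀ (θ : ℝ) (j : Fin n),
      (circleMap 0 r θ • (Pi.single j 1 : Fin n → ℂ)) ∈ ball (0 : Fin n → ℂ) δ := by
    intro θ j
    rw [mem_ball_zero_iff, norm_smul, hnorme j, mul_one]
    simpa [norm_circleMap_zero, abs_of_pos hr0] using hrδ
  -- the Cauchy integral representation of directional derivatives at 0
  have hrep : ∀ ψ : (Fin n → ℂ) → (Fin n → ℂ), Differentiable ℂ ψ → ∀ j : Fin n,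
      fderiv ℂ ψ 0 (Pi.single j 1) = (2 * (Real.pi : ℂ) * Complex.I)⁻¹ •
        ∫ θ in (0:ℝ)..2 * Real.pi, deriv (circleMap 0 r) θ •
          ((circleMap 0 r θ) ^ (-2:ℤ) • ψ (circleMap 0 r θ • (Pi.single j 1 : Fin n → ℂ))) := by
    intro ψ hψ j
    have hsmul : Differentiable ℂ (fun w : ℂ => w • (Pi.single j 1 : Fin n → ℂ)) :=
      fun w => ((hasDerivAt_id w).smul_const _).differentiableAt
    have hcomp : HasDerivAt (fun w : ℂ => ψ (w • (Pi.single j 1 : Fin n → ℂ)))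
        (fderiv ℂ ψ 0 (Pi.single j 1)) 0 := by
      have h1 : HasFDerivAt ψ (fderiv ℂ ψ 0) ((0:ℂ) • (Pi.single j 1 : Fin n → ℂ)) := by
        rw [zero_smul]; exact (hψ 0).hasFDerivAt
      have h2 : HasDerivAt (fun w : ℂ => w • (Pi.single j 1 : Fin n → ℂ))
          ((Pi.single j 1 : Fin n → ℂ)) 0 := by
        simpa using (hasDerivAt_id (0:ℂ)).smul_const (Pi.single j 1 : Fin n → ℂ)
      exact h1.comp_hasDerivAt 0 h2
    have hd : DiffContOnCl ℂ (fun w : ℂ => ψ (w • (Pi.single j 1 : Fin n → ℂ))) (ball 0 r) :=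
      Differentiable.diffContOnCl (fun w => (hψ _).comp w (hsmul w))
    have h3 : deriv (fun w : ℂ => ψ (w • (Pi.single j 1 : Fin n → ℂ))) 0 =
        (2 * (Real.pi : ℂ) * Complex.I)⁻¹ • ∮ z in C(0, r),
          (z - 0) ^ (-2:ℤ) • ψ (z • (Pi.single j 1 : Fin n → ℂ)) := by
      have h := hd.circleIntegral_one_div_sub_center_pow_smul hr0 1
      have he : (∮ z in C(0, r), (z - 0) ^ (-2:ℤ) • ψ (z • (Pi.single j 1 : Fin n → ℂ))) =
          ∮ z in C((0:ℂ), r), (1 / (z - 0) ^ (1 + 1)) • ψ (z • (Pi.single j 1 : Fin n → ℂ)) := by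
        congr 1; funext z; simp [zpow_neg]
      rw [he, h, iteratedDeriv_one, Nat.factorial_one, Nat.cast_one, div_one, smul_smul,
        inv_mul_cancel₀ Complex.two_pi_I_ne_zero, one_smul]
    rw [hcomp.deriv] at h3
    rw [h3]
    simp only [circleIntegral, sub_zero]
  -- continuity in θ of the integrand
  have hcontθ : ∀ ψ : (Fin n → ℂ) → (Fin n → ℂ), Continuous ψ → ∀ j : Fin n,
      Continuous (fun θ : ℝ => deriv (circleMap 0 r) θ •
        ((circleMap 0 r θ) ^ (-2:ℤ) • ψ (circleMap 0 r θ • (Pi.single j 1 : Fin n → ℂ)))) := by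
    intro ψ hψ j
    have h1 : Continuous fun θ : ℝ => deriv (circleMap 0 r) θ := by
      simp only [deriv_circleMap]
      exact (continuous_circleMap 0 r).mul continuous_const
    have h2 : Continuous fun θ : ℝ => (circleMap 0 r θ) ^ (-2:ℤ) :=
      (continuous_circleMap 0 r).zpow₀ _ (fun θ => Or.inl (circleMap_ne_center hr0.ne'))
    exact h1.smul (h2.smul (hψ.comp ((continuous_circleMap 0 r).smul continuous_const)))
  -- norm of the integrand
  have hnormF : ∀ (θ : ℝ) (u : Fin n → ℂ),
      ‖deriv (circleMap 0 r) θ • ((circleMap 0 r θ) ^ (-2:ℤ) • u)‖ = r⁻¹ * ‖u‖ := by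
    intro θ u
    have e1 : ‖deriv (circleMap 0 r) θ‖ = r := by
      simp [deriv_circleMap, norm_circleMap_zero, abs_of_pos hr0]
    have e2 : ‖(circleMap 0 r θ) ^ (-2:ℤ)‖ = r ^ (-2:ℤ) := by
      rw [norm_zpow]
      simp [norm_circleMap_zero, abs_of_pos hr0]
    rw [norm_smul, norm_smul, e1, e2, zpow_neg,
      show ((r:ℝ) ^ (2:ℤ)) = r * r by rw [show (2:ℤ) = ((2:ℕ):ℤ) from rfl, zpow_natCast, pow_two],
      mul_inv]
    field_simp
  -- bound for V on the closed unit ball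
  obtain ⟨K, hK⟩ : ∃ K, ∀ z ∈ closedBall (0 : Fin n → ℂ) 1, ‖V z‖ ≤ K :=
    (isCompact_closedBall _ _).exists_bound_of_continuousOn hV.continuous.continuousOn
  -- the derivative in t of t ↦ fderiv (φ t) 0 (e j)
  have hMder : ∀ t₀ : ℝ, 0 < t₀ → ∀ j : Fin n,
      HasDerivAt (fun t => fderiv ℂ (φ t) 0 (Pi.single j 1))
        (fderiv ℂ (fun z => V (φ t₀ z)) 0 (Pi.single j 1)) t₀ := by
    intro t₀ ht₀ j
    have harg1 : ∀ᶠ t in 𝓝 t₀, MeasureTheory.AEStronglyMeasurable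
        (fun θ : ℝ => deriv (circleMap 0 r) θ • ((circleMap 0 r θ) ^ (-2:ℤ) •
          φ t (circleMap 0 r θ • (Pi.single j 1 : Fin n → ℂ))))
        (MeasureTheory.volume.restrict (Set.uIoc (0:ℝ) (2 * Real.pi))) :=
      Eventually.of_forall fun t => (hcontθ (φ t) (hhol t).continuous j).aestronglyMeasurable
    have harg2 : IntervalIntegrable
        (fun θ : ℝ => deriv (circleMap 0 r) θ • ((circleMap 0 r θ) ^ (-2:ℤ) •
          φ t₀ (circleMap 0 r θ • (Pi.single j 1 : Fin n → ℂ))))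
        MeasureTheory.volume 0 (2 * Real.pi) :=
      (hcontθ (φ t₀) (hhol t₀).continuous j).intervalIntegrable _ _
    have harg3 : MeasureTheory.AEStronglyMeasurable
        (fun θ : ℝ => deriv (circleMap 0 r) θ • ((circleMap 0 r θ) ^ (-2:ℤ) •
          V (φ t₀ (circleMap 0 r θ • (Pi.single j 1 : Fin n → ℂ)))))
        (MeasureTheory.volume.restrict (Set.uIoc (0:ℝ) (2 * Real.pi))) :=
      (hcontθ (fun z => V (φ t₀ z))
        (hV.continuous.comp (hhol t₀).continuous) j).aestronglyMeasurable
    have harg4 : ∀ᵐ θ : ℝ ∂MeasureTheory.volume, θ ∈ Set.uIoc (0:ℝ) (2 * Real.pi) →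
        ∀ t ∈ ball t₀ t₀,
        ‖deriv (circleMap 0 r) θ • ((circleMap 0 r θ) ^ (-2:ℤ) •
          V (φ t (circleMap 0 r θ • (Pi.single j 1 : Fin n → ℂ))))‖ ≤ r⁻¹ * K := by
      refine MeasureTheory.ae_of_all _ fun θ _ t ht => ?_
      have ht0 : 0 ≤ t := by
        rw [mem_ball, Real.dist_eq, abs_sub_lt_iff] at ht
        linarith [ht.1, ht.2]
      rw [hnormF]
      refine mul_le_mul_of_nonneg_left ?_ (inv_nonneg.2 hr0.le)
      exact hK _ (ball_subset_closedBall (hδball t ht0 _ (hcirc θ j)))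
    have harg5 : IntervalIntegrable (fun _ : ℝ => r⁻¹ * K)
        MeasureTheory.volume 0 (2 * Real.pi) := intervalIntegrable_const
    have harg6 : ∀ᵐ θ : ℝ ∂MeasureTheory.volume, θ ∈ Set.uIoc (0:ℝ) (2 * Real.pi) →
        ∀ t ∈ ball t₀ t₀,
        HasDerivAt (fun s => deriv (circleMap 0 r) θ • ((circleMap 0 r θ) ^ (-2:ℤ) •
            φ s (circleMap 0 r θ • (Pi.single j 1 : Fin n → ℂ))))
          (deriv (circleMap 0 r) θ • ((circleMap 0 r θ) ^ (-2:ℤ) •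
            V (φ t (circleMap 0 r θ • (Pi.single j 1 : Fin n → ℂ))))) t :=
      MeasureTheory.ae_of_all _ fun θ _ t _ =>
        (((hflow _ t).const_smul ((circleMap 0 r θ) ^ (-2:ℤ))).const_smul
          (deriv (circleMap 0 r) θ))
    have key := (intervalIntegral.hasDerivAt_integral_of_dominated_loc_of_deriv_le (ball_mem_nhds t₀ ht₀)
      harg1 harg2 harg3 harg4 harg5 harg6).2
    have key2 := key.const_smul ((2 * (Real.pi:ℂ) * Complex.I)⁻¹)
    have heq : (fun t => fderiv ℂ (φ t) 0 (Pi.single j 1 : Fin n → ℂ)) =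
        (fun t => (2 * (Real.pi:ℂ) * Complex.I)⁻¹ •
          ∫ θ in (0:ℝ)..2 * Real.pi, deriv (circleMap 0 r) θ •
            ((circleMap 0 r θ) ^ (-2:ℤ) •
              φ t (circleMap 0 r θ • (Pi.single j 1 : Fin n → ℂ)))) :=
      funext fun t => hrep (φ t) (hhol t) j
    rw [heq, hrep (fun z => V (φ t₀ z)) (fun z => (hV _).comp z (hhol t₀ z)) j]
    exact key2
  -- limits of the derivative matrix entries
  have hcol0 : ∀ j : Fin n, Tendsto (fun t => fderiv ℂ (φ t) 0 (Pi.single j 1)) (𝓝[≥] (0:ℝ))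
      (𝓝 (fderiv ℂ (φ 0) 0 (Pi.single j 1))) := by
    intro j
    have heq : (fun t => fderiv ℂ (φ t) 0 (Pi.single j 1 : Fin n → ℂ)) =
        (fun t => (2 * (Real.pi:ℂ) * Complex.I)⁻¹ •
          ∫ θ in (0:ℝ)..2 * Real.pi, deriv (circleMap 0 r) θ •
            ((circleMap 0 r θ) ^ (-2:ℤ) •
              φ t (circleMap 0 r θ • (Pi.single j 1 : Fin n → ℂ)))) :=
      funext fun t => hrep (φ t) (hhol t) j
    rw [heq, hrep (φ 0) (hhol 0) j]
    refine Tendsto.const_smul ?_ _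
    refine intervalIntegral.tendsto_integral_filter_of_dominated_convergence
      (fun _ => r⁻¹ * 1) ?_ ?_ ?_ ?_
    · exact Eventually.of_forall fun t => (hcontθ (φ t) (hhol t).continuous j).aestronglyMeasurable
    · filter_upwards [eventually_mem_nhdsWithin] with t ht
      refine MeasureTheory.ae_of_all _ fun θ _ => ?_
      rw [hnormF]
      have hb := hδball t ht _ (hcirc θ j)
      rw [mem_ball_zero_iff] at hb
      exact mul_le_mul_of_nonneg_left hb.le (inv_nonneg.2 hr0.le)
    · exact intervalIntegrable_const
    · refine MeasureTheory.ae_of_all _ fun θ _ => ?_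
      have hc : Tendsto (fun t => φ t (circleMap 0 r θ • (Pi.single j 1 : Fin n → ℂ)))
          (𝓝[≥] (0:ℝ)) (𝓝 (φ 0 (circleMap 0 r θ • (Pi.single j 1 : Fin n → ℂ)))) :=
        ((hflow _ 0).continuousAt.tendsto).mono_left nhdsWithin_le_nhds
      exact (hc.const_smul _).const_smul _
  have hcolInf : ∀ j : Fin n, Tendsto (fun t => fderiv ℂ (φ t) 0 (Pi.single j 1)) atTop
      (𝓝 (0 : Fin n → ℂ)) := by
    intro j
    have heq : (fun t => fderiv ℂ (φ t) 0 (Pi.single j 1 : Fin n → ℂ)) =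
        (fun t => (2 * (Real.pi:ℂ) * Complex.I)⁻¹ •
          ∫ θ in (0:ℝ)..2 * Real.pi, deriv (circleMap 0 r) θ •
            ((circleMap 0 r θ) ^ (-2:ℤ) •
              φ t (circleMap 0 r θ • (Pi.single j 1 : Fin n → ℂ)))) :=
      funext fun t => hrep (φ t) (hhol t) j
    rw [heq]
    have h0 : Tendsto (fun t => ∫ θ in (0:ℝ)..2 * Real.pi, deriv (circleMap 0 r) θ •
        ((circleMap 0 r θ) ^ (-2:ℤ) • φ t (circleMap 0 r θ • (Pi.single j 1 : Fin n → ℂ))))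
        atTop (𝓝 (∫ _ in (0:ℝ)..2 * Real.pi, (0 : Fin n → ℂ))) := by
      refine intervalIntegral.tendsto_integral_filter_of_dominated_convergence
        (fun _ => r⁻¹ * 1) ?_ ?_ ?_ ?_
      · exact Eventually.of_forall fun t =>
          (hcontθ (φ t) (hhol t).continuous j).aestronglyMeasurable
      · filter_upwards [eventually_ge_atTop (0:ℝ)] with t ht
        refine MeasureTheory.ae_of_all _ fun θ _ => ?_
        rw [hnormF]
        have hb := hδball t ht _ (hcirc θ j)
        rw [mem_ball_zero_iff] at hb
        exact mul_le_mul_of_nonneg_left hb.le (inv_nonneg.2 hr0.le)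
      · exact intervalIntegrable_const
      · refine MeasureTheory.ae_of_all _ fun θ _ => ?_
        simpa using ((hattract _).const_smul
          ((circleMap 0 r θ) ^ (-2:ℤ))).const_smul (deriv (circleMap 0 r) θ)
    simpa using h0.const_smul ((2 * (Real.pi:ℂ) * Complex.I)⁻¹)
  -- the matrix of the derivative of φ t at 0
  set Mt : ℝ → Matrix (Fin n) (Fin n) ℂ :=
    fun t => Matrix.of fun i j => fderiv ℂ (φ t) 0 (Pi.single j 1) i with hMtdef
  -- linearity expansion
  have hlin : ∀ (p v : Fin n → ℂ) (i : Fin n),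
      fderiv ℂ V p v i = ∑ k, fderiv ℂ V p (Pi.single k 1) i * v k := by
    intro p v i
    have hv : (∑ k, v k • (Pi.single k 1 : Fin n → ℂ)) = v := by
      funext m
      rw [Finset.sum_apply]
      simp [Pi.single_apply]
    conv_lhs => rw [← hv]
    rw [map_sum, Finset.sum_apply]
    refine Finset.sum_congr rfl fun k _ => ?_
    rw [map_smul]
    simp [smul_eq_mul, mul_comm]
  have htrace : ∀ p : Fin n → ℂ,
      Matrix.trace (Matrix.of fun i k => fderiv ℂ V p (Pi.single k 1) i) = c := by
    intro p
    simpa [Matrix.trace, Matrix.diag] using hdiv p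
  -- Liouville's formula
  have hdetODE : ∀ t₀ : ℝ, 0 < t₀ → HasDerivAt (fun t => (Mt t).det) (c * (Mt t₀).det) t₀ := by
    intro t₀ ht₀
    have hODE : ∀ i j, HasDerivAt (fun t => Mt t i j)
        (((Matrix.of fun i k => fderiv ℂ V (φ t₀ 0) (Pi.single k 1) i) * Mt t₀) i j) t₀ := by
      intro i j
      have h2 := hasDerivAt_pi.mp (hMder t₀ ht₀ j) i
      have h3 : fderiv ℂ (fun z => V (φ t₀ z)) 0 (Pi.single j 1) i
          = ((Matrix.of fun i k => fderiv ℂ V (φ t₀ 0) (Pi.single k 1) i) * Mt t₀) i j := by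
        have hco : fderiv ℂ (fun z => V (φ t₀ z)) 0 =
            (fderiv ℂ V (φ t₀ 0)).comp (fderiv ℂ (φ t₀) 0) :=
          fderiv_comp 0 (hV _) (hhol t₀ 0)
        rw [hco]
        rw [ContinuousLinearMap.comp_apply]
        rw [hlin]
        rw [Matrix.mul_apply]
        rfl
      exact h3 ▸ h2
    have h4 := liouville_det_hasDerivAt Mt _ t₀ hODE
    convert h4 using 1
    rw [Matrix.trace_mul_comm, Matrix.mul_assoc, Matrix.mul_adjugate, Matrix.mul_smul,
      Matrix.mul_one, Matrix.trace_smul, htrace (φ t₀ 0), smul_eq_mul, mul_comm]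
  -- value at 0
  have hM0 : Mt 0 = 1 := by
    ext i j
    rw [hMtdef]
    simp only [Matrix.of_apply, hφ0, fderiv_id]
    simp [Matrix.one_apply, Pi.single_apply]
  -- limits of the determinant
  have hdet0 : Tendsto (fun t => (Mt t).det) (𝓝[≥] (0:ℝ)) (𝓝 1) := by
    have hMtend : Tendsto (fun t => Mt t) (𝓝[≥] (0:ℝ)) (𝓝 (Mt 0)) := by
      refine tendsto_pi_nhds.2 ?_
      intro i
      refine tendsto_pi_nhds.2 ?_
      intro j
      exact tendsto_pi_nhds.mp (hcol0 j) i
    have h2 := ((continuous_id.matrix_det).tendsto (Mt 0)).comp hMtend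
    simpa [Function.comp_def, hM0] using h2
  have hdetInf : Tendsto (fun t => (Mt t).det) atTop (𝓝 0) := by
    have hMtend : Tendsto (fun t => Mt t) atTop (𝓝 (0 : Matrix (Fin n) (Fin n) ℂ)) := by
      refine tendsto_pi_nhds.2 ?_
      intro i
      refine tendsto_pi_nhds.2 ?_
      intro j
      exact tendsto_pi_nhds.mp (hcolInf j) i
    have h2 := ((continuous_id.matrix_det).tendsto (0 : Matrix (Fin n) (Fin n) ℂ)).comp hMtend
    simpa [Function.comp_def, Matrix.det_zero] using h2
  -- the function exp(-ct) det(Mt t) is constant on (0, ∞)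
  have hgder : ∀ t₀ : ℝ, 0 < t₀ →
      HasDerivAt (fun t : ℝ => Complex.exp (-(c * t)) * (Mt t).det) 0 t₀ := by
    intro t₀ ht₀
    have h1 : HasDerivAt (fun t : ℝ => (t : ℂ)) 1 t₀ := by
      simpa using (hasDerivAt_id t₀).ofReal_comp
    have h2 := ((h1.const_mul c).fun_neg).cexp
    have h3 := h2.fun_mul (hdetODE t₀ ht₀)
    exact h3.congr_deriv (by ring)
  have hgconst : ∀ s t : ℝ, 0 < s → s ≤ t →
      Complex.exp (-(c * t)) * (Mt t).det = Complex.exp (-(c * s)) * (Mt s).det := by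
    intro s t hs hst
    have := constant_of_has_deriv_right_zero
      (f := fun t : ℝ => Complex.exp (-(c * t)) * (Mt t).det) (a := s) (b := t)
      (fun x hx => (hgder x (lt_of_lt_of_le hs hx.1)).continuousAt.continuousWithinAt)
      (fun x hx => (hgder x (lt_of_lt_of_le hs hx.1)).hasDerivWithinAt)
    exact this t (Set.right_mem_Icc.mpr hst)
  have hg1 : Complex.exp (-(c * ((1:ℝ):ℂ))) * (Mt 1).det = 1 := by
    have htend : Tendsto (fun t : ℝ => Complex.exp (-(c * t)) * (Mt t).det)
        (𝓝[>] (0:ℝ)) (𝓝 1) := by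
      have hexp : Tendsto (fun t : ℝ => Complex.exp (-(c * t))) (𝓝[>] (0:ℝ)) (𝓝 1) := by
        have hcont : Continuous fun t : ℝ => Complex.exp (-(c * t)) :=
          Complex.continuous_exp.comp ((continuous_const.mul Complex.continuous_ofReal).neg)
        have := (hcont.tendsto 0).mono_left (nhdsWithin_le_nhds (s := Set.Ioi (0:ℝ)))
        simpa using this
      have hd := hdet0.mono_left (nhdsWithin_mono 0 Set.Ioi_subset_Ici_self)
      simpa using hexp.mul hd
    have hconst : Tendsto (fun t : ℝ => Complex.exp (-(c * t)) * (Mt t).det) (𝓝[>] (0:ℝ))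
        (𝓝 (Complex.exp (-(c * ((1:ℝ):ℂ))) * (Mt 1).det)) := by
      refine Tendsto.congr' ?_ tendsto_const_nhds
      filter_upwards [Ioc_mem_nhdsGT_of_mem
        (show (0:ℝ) ∈ Set.Ico (0:ℝ) 1 from ⟨le_refl 0, zero_lt_one⟩)] with s hs
      exact hgconst s 1 hs.1 hs.2
    exact tendsto_nhds_unique hconst htend
  have hdexp : ∀ t : ℝ, 1 ≤ t → (Mt t).det = Complex.exp (c * t) := by
    intro t ht
    have h1 := hgconst 1 t one_pos ht
    rw [hg1] at h1
    rw [Complex.exp_neg] at h1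
    field_simp at h1
    exact h1
  have hexp0 : Tendsto (fun t : ℝ => Complex.exp (c * t)) atTop (𝓝 0) := by
    refine hdetInf.congr' ?_
    filter_upwards [eventually_ge_atTop (1:ℝ)] with t ht
    exact hdexp t ht
  have hre : Tendsto (fun t : ℝ => Real.exp ((c * (t:ℂ)).re)) atTop (𝓝 0) := by
    have := hexp0.norm
    simpa [Complex.norm_exp] using this
  by_contra hcon
  push_neg at hcon
  have hev := hre.eventually_lt_const (show (0:ℝ) < 1 by norm_num)
  obtain ⟨t, hlt, ht0⟩ := (hev.and (eventually_ge_atTop (0:ℝ))).exists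
  have h5 : (0:ℝ) ≤ (c * (t:ℂ)).re := by
    simp only [Complex.mul_re, Complex.ofReal_re, Complex.ofReal_im, mul_zero, sub_zero]
    exact mul_nonneg hcon ht0
  have h6 := Real.one_le_exp h5
  linarith
end

section
/- Let F : Ω → ℂⁿ be a holomorphic map on an open neighborhood Ω of 0 in ℂⁿ with F(0) = 0 and DF(0) = Id. Then for every sufficiently small ε > 0 the ball B(0,ε) is contained in Ω and the image F(B(0,ε)) is an open convex subset of ℂⁿ, and F restricted to B(0,ε) is injective. -/
open Filter Topology Metric

private lemma cauchy_bound_aux {E : Type*} [NormedAddCommGroup E] [NormedSpace ℂ E]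
    {ψ : ℂ → E} {ρ C : ℝ} (hρ : 0 < ρ)
    (hdiff : ∀ z ∈ closedBall (0:ℂ) ρ, DifferentiableAt ℂ ψ z)
    (hC : ∀ z ∈ sphere (0:ℂ) ρ, ‖ψ z‖ ≤ C) : ‖deriv ψ 0‖ ≤ C / ρ := by
  refine Complex.norm_deriv_le_of_forall_mem_sphere_norm_le hρ ?_ hC
  refine DifferentiableOn.diffContOnCl ?_
  rw [closure_ball (0:ℂ) hρ.ne']
  exact fun z hz => (hdiff z hz).differentiableWithinAt

private lemma opnorm_le_of_unit {E : Type*} [NormedAddCommGroup E] [NormedSpace ℂ E]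
    {T : E →L[ℂ] E} {C : ℝ} (hC : 0 ≤ C)
    (h : ∀ w : E, ‖w‖ = 1 → ‖T w‖ ≤ C) : ‖T‖ ≤ C := by
  refine T.opNorm_le_bound hC (fun w => ?_)
  rcases eq_or_ne w 0 with rfl | hw
  · simp [hC]
  · have hn : ‖w‖ ≠ 0 := norm_ne_zero_iff.2 hw
    have h1 : ‖(‖w‖⁻¹ : ℝ) • w‖ = 1 := by
      rw [norm_smul, Real.norm_eq_abs, abs_of_nonneg (by positivity)]
      field_simp
    calc ‖T w‖ = ‖T ((‖w‖ : ℝ) • (‖w‖⁻¹ : ℝ) • w)‖ := by rw [smul_inv_smul₀ hn]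
      _ = ‖(‖w‖ : ℝ) • T ((‖w‖⁻¹ : ℝ) • w)‖ := by rw [T.map_smul_of_tower]
      _ = ‖w‖ * ‖T ((‖w‖⁻¹ : ℝ) • w)‖ := by
          rw [norm_smul, Real.norm_eq_abs, abs_of_nonneg (norm_nonneg w)]
      _ ≤ ‖w‖ * C := mul_le_mul_of_nonneg_left (h _ h1) (norm_nonneg w)
      _ = C * ‖w‖ := mul_comm _ _

private lemma combo_norm_sq {E : Type*} [NormedAddCommGroup E] [InnerProductSpace ℂ E]
    (x y : E) (t κ : ℝ) (ht0 : 0 ≤ t) (ht1 : t ≤ 1) (hx : ‖x‖ ≤ κ) (hy : ‖y‖ ≤ κ) :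
    ‖(1 - t) • x + t • y‖^2 ≤ κ^2 - t*(1-t)*‖x - y‖^2 := by
  have hsm : ∀ (r : ℝ) (v : E), r • v = (r : ℂ) • v := fun r v => by
    rw [← algebraMap_smul ℂ r v]; norm_num
  have e1 : ‖(1-t)•x + t•y‖^2
      = ‖(1-t)•x‖^2 + 2*RCLike.re (inner ℂ ((1-t)•x) (t•y)) + ‖t•y‖^2 := norm_add_sq _ _
  have e2 : ‖x - y‖^2 = ‖x‖^2 - 2*RCLike.re (inner ℂ x y) + ‖y‖^2 := norm_sub_sq _ _
  have e3 : RCLike.re (inner ℂ ((1-t)•x) (t•y))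
      = (1-t)*(t*RCLike.re (inner ℂ x y)) := by
    rw [hsm (1-t) x, hsm t y, inner_smul_left, inner_smul_right]
    simp [RCLike.re_to_complex, Complex.conj_ofReal]
  have n1 : ‖(1-t)•x‖ = (1-t)*‖x‖ := by
    rw [norm_smul, Real.norm_eq_abs, abs_of_nonneg (by linarith)]
  have n2 : ‖t•y‖ = t*‖y‖ := by
    rw [norm_smul, Real.norm_eq_abs, abs_of_nonneg ht0]
  rw [e1, e2, e3, n1, n2]
  have hκ0 : 0 ≤ κ := le_trans (norm_nonneg x) hx
  nlinarith [mul_nonneg (mul_nonneg (by linarith : (0:ℝ) ≤ 1 - t) (sub_nonneg.2 hx))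
      (by linarith [norm_nonneg x] : (0:ℝ) ≤ κ + ‖x‖),
    mul_nonneg (mul_nonneg ht0 (sub_nonneg.2 hy))
      (by linarith [norm_nonneg y] : (0:ℝ) ≤ κ + ‖y‖)]

set_option maxHeartbeats 1000000 in
private lemma key_estimate {E : Type*} [NormedAddCommGroup E] [InnerProductSpace ℂ E]
    {F : E → E} {D : E → (E →L[ℂ] E)} {M ε : ℝ} (hM : 1 ≤ M) (hεM : M * ε ≤ 1/16)
    (hTay : ∀ u ∈ ball (0:E) ε, ∀ v ∈ ball (0:E) ε,
      ‖F u - F v - D v (u - v)‖ ≤ M * ‖u - v‖ * ‖u - v‖)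
    (hDs : ∀ w ∈ ball (0:E) ε, ‖D w - ContinuousLinearMap.id ℂ E‖ ≤ M * ε)
    (happrox : ∀ u ∈ ball (0:E) ε, ∀ v ∈ ball (0:E) ε,
      ‖F u - F v - (u - v)‖ ≤ (M * ε) * ‖u - v‖)
    {x y z : E} {t : ℝ} (hx : x ∈ ball (0:E) ε) (hy : y ∈ ball (0:E) ε) (hz : z ∈ ball (0:E) ε)
    (ht0 : 0 ≤ t) (ht1 : t ≤ 1) (hFz : F z = (1 - t) • F x + t • F y) :
    ‖z‖ ≤ max ‖x‖ ‖y‖ := by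
  have hxε := mem_ball_zero_iff.1 hx
  have hyε := mem_ball_zero_iff.1 hy
  have hεpos : 0 < ε := lt_of_le_of_lt (norm_nonneg x) hxε
  have hM0 : (0:ℝ) ≤ M := by linarith
  have h1t : (0:ℝ) ≤ 1 - t := by linarith
  set δ := M * ε with hδ_def
  have hδ0 : 0 ≤ δ := by positivity
  set m := (1-t) • x + t • y with hm_def
  set d := ‖x - y‖ with hd_def
  set r := ‖z - m‖ with hr_def
  have hd0 : 0 ≤ d := norm_nonneg _
  have hr0 : 0 ≤ r := norm_nonneg _
  set κ := max ‖x‖ ‖y‖ with hκ_def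
  have hκ0 : 0 ≤ κ := le_trans (norm_nonneg x) (le_max_left _ _)
  have hκε : κ < ε := max_lt hxε hyε
  have hMκ : M * κ ≤ 1/16 := by
    have h := mul_le_mul_of_nonneg_left hκε.le hM0
    linarith [h]
  have hdκ : d ≤ 2*κ := by
    have h0 := norm_sub_le x y
    have h1 : ‖x‖ ≤ κ := le_max_left _ _
    have h2 : ‖y‖ ≤ κ := le_max_right _ _
    rw [hd_def]; linarith
  -- step A: crude bound on r
  have idA : z - m = (1-t) • (F x - F z - (x - z)) + t • (F y - F z - (y - z)) := by
    rw [hm_def, hFz]; module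
  have rA : r ≤ δ * ((1-t) * ‖x - z‖ + t * ‖y - z‖) := by
    have hb := norm_add_le ((1-t) • (F x - F z - (x - z))) (t • (F y - F z - (y - z)))
    rw [← idA] at hb
    rw [norm_smul, norm_smul, Real.norm_eq_abs, Real.norm_eq_abs,
      abs_of_nonneg h1t, abs_of_nonneg ht0] at hb
    have c1 := mul_le_mul_of_nonneg_left (happrox x hx z hz) h1t
    have c2 := mul_le_mul_of_nonneg_left (happrox y hy z hz) ht0
    calc r ≤ (1-t) * ‖F x - F z - (x - z)‖ + t * ‖F y - F z - (y - z)‖ := hb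
      _ ≤ (1-t) * ((M * ε) * ‖x - z‖) + t * ((M * ε) * ‖y - z‖) := add_le_add c1 c2
      _ = δ * ((1-t) * ‖x - z‖ + t * ‖y - z‖) := by rw [hδ_def]; ring
  have hxm : ‖x - m‖ = t * d := by
    have hh : x - m = t • (x - y) := by rw [hm_def]; module
    rw [hh, norm_smul, Real.norm_eq_abs, abs_of_nonneg ht0, hd_def]
  have hym : ‖y - m‖ = (1-t) * d := by
    have hh : y - m = (1-t) • (y - x) := by rw [hm_def]; module
    rw [hh, norm_smul, Real.norm_eq_abs, abs_of_nonneg h1t, hd_def, norm_sub_rev]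
  have hmz : ‖m - z‖ = r := by rw [hr_def, norm_sub_rev]
  have hxz : ‖x - z‖ ≤ t*d + r := by
    have h := norm_add_le (x - m) (m - z)
    rw [show (x - m) + (m - z) = x - z by abel, hxm, hmz] at h
    exact h
  have hyz : ‖y - z‖ ≤ (1-t)*d + r := by
    have h := norm_add_le (y - m) (m - z)
    rw [show (y - m) + (m - z) = y - z by abel, hym, hmz] at h
    exact h
  have hδr : δ * r ≤ (1/16) * r := mul_le_mul_of_nonneg_right hεM hr0
  have hS0 : 0 ≤ t*(1-t)*d := mul_nonneg (mul_nonneg ht0 h1t) hd0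
  have crude : r ≤ (1/4) * (t*(1-t)*d) := by
    have h1 : r ≤ δ*(2*(t*(1-t)*d)) + δ*r := by
      have hin : (1-t) * ‖x - z‖ + t * ‖y - z‖ ≤ (1-t)*(t*d+r) + t*((1-t)*d+r) :=
        add_le_add (mul_le_mul_of_nonneg_left hxz h1t) (mul_le_mul_of_nonneg_left hyz ht0)
      calc r ≤ δ * ((1-t) * ‖x - z‖ + t * ‖y - z‖) := rA
        _ ≤ δ * ((1-t)*(t*d+r) + t*((1-t)*d+r)) := mul_le_mul_of_nonneg_left hin hδ0
        _ = δ*(2*(t*(1-t)*d)) + δ*r := by ring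
    have h2 : δ*(2*(t*(1-t)*d)) ≤ (1/16)*(2*(t*(1-t)*d)) :=
      mul_le_mul_of_nonneg_right hεM (by linarith)
    linarith [h1, h2, hδr]
  have hxz2 : ‖x - z‖ ≤ 2*(t*d) := by
    have htd : t*(1-t)*d ≤ t*d := by
      have hpos : 0 ≤ t*(t*d) := by positivity
      have he : t*(1-t)*d + t*(t*d) = t*d := by ring
      linarith [hpos, he]
    linarith [hxz, crude]
  have hyz2 : ‖y - z‖ ≤ 2*((1-t)*d) := by
    have htd : t*(1-t)*d ≤ (1-t)*d := by
      have hpos : 0 ≤ (1-t)*((1-t)*d) := by positivity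
      have he : t*(1-t)*d + (1-t)*((1-t)*d) = (1-t)*d := by ring
      linarith [hpos, he]
    linarith [hyz, crude]
  -- step B : refined bound on r
  have hmz' : m - z = (1-t) • (x - z) + t • (y - z) := by rw [hm_def]; module
  have happD : (D z - ContinuousLinearMap.id ℂ E) (m - z)
      = ((1-t) • (D z (x - z)) + t • (D z (y - z))) - (m - z) := by
    rw [ContinuousLinearMap.sub_apply, ContinuousLinearMap.id_apply]
    congr 1
    rw [hmz', map_add, (D z).map_smul_of_tower, (D z).map_smul_of_tower]
  have idB : z - m = (1-t) • (F x - F z - D z (x - z)) + t • (F y - F z - D z (y - z))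
      + ((D z - ContinuousLinearMap.id ℂ E) (m - z)) := by
    rw [happD, hm_def, hFz]; module
  have rB : r ≤ (1-t)*(M*‖x-z‖*‖x-z‖) + t*(M*‖y-z‖*‖y-z‖) + δ*r := by
    have hb := norm_add_le ((1-t) • (F x - F z - D z (x - z)) + t • (F y - F z - D z (y - z)))
      ((D z - ContinuousLinearMap.id ℂ E) (m - z))
    rw [← idB] at hb
    have hb2 := norm_add_le ((1-t) • (F x - F z - D z (x - z))) (t • (F y - F z - D z (y - z)))
    rw [norm_smul, norm_smul, Real.norm_eq_abs, Real.norm_eq_abs,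
      abs_of_nonneg h1t, abs_of_nonneg ht0] at hb2
    have c1 := mul_le_mul_of_nonneg_left (hTay x hx z hz) h1t
    have c2 := mul_le_mul_of_nonneg_left (hTay y hy z hz) ht0
    have c3 : ‖(D z - ContinuousLinearMap.id ℂ E) (m - z)‖ ≤ δ * r := by
      calc ‖(D z - ContinuousLinearMap.id ℂ E) (m - z)‖
          ≤ ‖D z - ContinuousLinearMap.id ℂ E‖ * ‖m - z‖ :=
            ContinuousLinearMap.le_opNorm _ _
        _ ≤ (M*ε) * r := by
            rw [hmz]
            exact mul_le_mul_of_nonneg_right (hDs z hz) hr0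
        _ = δ * r := by rw [hδ_def]
    calc r ≤ ‖(1-t) • (F x - F z - D z (x - z)) + t • (F y - F z - D z (y - z))‖
          + ‖(D z - ContinuousLinearMap.id ℂ E) (m - z)‖ := hb
      _ ≤ ((1-t) * ‖F x - F z - D z (x - z)‖ + t * ‖F y - F z - D z (y - z)‖) + δ*r :=
          add_le_add hb2 c3
      _ ≤ ((1-t)*(M*‖x-z‖*‖x-z‖) + t*(M*‖y-z‖*‖y-z‖)) + δ*r :=
          add_le_add (add_le_add c1 c2) le_rfl
  have hS'0 : 0 ≤ t*(1-t)*(d*d) := mul_nonneg (mul_nonneg ht0 h1t) (mul_self_nonneg d)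
  have hr8 : r ≤ 8*M*(t*(1-t)*(d*d)) := by
    have q1 : ‖x-z‖*‖x-z‖ ≤ (2*(t*d))*(2*(t*d)) := mul_self_le_mul_self (norm_nonneg _) hxz2
    have q2 : ‖y-z‖*‖y-z‖ ≤ (2*((1-t)*d))*(2*((1-t)*d)) :=
      mul_self_le_mul_self (norm_nonneg _) hyz2
    have e1 : (1-t)*(M*‖x-z‖*‖x-z‖) ≤ (1-t)*M*((2*(t*d))*(2*(t*d))) := by
      linarith [mul_le_mul_of_nonneg_left q1 (mul_nonneg h1t hM0)]
    have e2 : t*(M*‖y-z‖*‖y-z‖) ≤ t*M*((2*((1-t)*d))*(2*((1-t)*d))) := by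
      linarith [mul_le_mul_of_nonneg_left q2 (mul_nonneg ht0 hM0)]
    have q3 : r ≤ 4*M*(t*(1-t)*(d*d)) + δ*r := by linarith [rB, e1, e2]
    have hMS : 0 ≤ M*(t*(1-t)*(d*d)) := mul_nonneg hM0 hS'0
    linarith [q3, hδr, hMS]
  -- endgame
  have hm2 : ‖m‖^2 ≤ κ^2 - t*(1-t)*d^2 := by
    rw [hm_def, hd_def]
    exact combo_norm_sq x y t κ ht0 ht1 (le_max_left _ _) (le_max_right _ _)
  have hzm : ‖z‖ ≤ ‖m‖ + r := by
    have h := norm_add_le m (z - m)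
    rw [show m + (z - m) = z by abel] at h
    rw [hr_def]; exact h
  have hs1 : 2*κ*r ≤ t*(1-t)*(d*d) := by
    have a1 : κ*r ≤ κ*(8*M*(t*(1-t)*(d*d))) := mul_le_mul_of_nonneg_left hr8 hκ0
    have a3 := mul_le_mul_of_nonneg_right hMκ hS'0
    linarith [a1, a3]
  have hsκ : t*(1-t)*(d*d) ≤ κ^2 := by
    have h4 : t*(1-t) ≤ 1/4 := by linarith [sq_nonneg (2*t-1)]
    have hd4 : d*d ≤ (2*κ)*(2*κ) := mul_self_le_mul_self hd0 hdκ
    linarith [mul_le_mul_of_nonneg_right h4 (mul_self_nonneg d), hd4]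
  rcases eq_or_lt_of_le hκ0 with hκeq | hκpos
  · have hd00 : d = 0 := by linarith
    have hr00 : r ≤ 0 := by
      have he : 8*M*(t*(1-t)*(d*d)) = 0 := by rw [hd00]; ring
      linarith [hr8]
    have hκ' : κ = 0 := hκeq.symm
    rw [hκ', hd00] at hm2
    norm_num at hm2
    have hm00 : ‖m‖ = 0 := by
      have hsq : ‖m‖^2 = 0 := by simp [hm2]
      exact (pow_eq_zero_iff (two_ne_zero)).1 hsq
    rw [hκ']
    linarith
  · have h1 : r ≤ κ/2 := by
      by_contra hc
      push_neg at hc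
      have hk2 : (0:ℝ) < 2*κ := by linarith
      have := mul_lt_mul_of_pos_left hc hk2
      linarith [hs1, hsκ, this]
    have h2 : ‖m‖^2 ≤ (κ - r)^2 := by linarith [hm2, hs1, sq_nonneg r]
    have h3 : ‖m‖ ≤ κ - r := by
      by_contra hc
      push_neg at hc
      have := mul_self_lt_mul_self (by linarith : (0:ℝ) ≤ κ - r) hc
      have hexp : (κ - r)^2 = (κ-r)*(κ-r) := sq ((κ:ℝ) - r) ▸ (sq (κ - r)).symm ▸ rfl
      nlinarith [h2, this]
    linarith
set_option maxHeartbeats 1000000 in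
/-- A holomorphic map `F` near `0 ∈ ℂⁿ` with `F(0) = 0` and `DF(0) = Id` maps every
sufficiently small Euclidean ball `B(0,ε)` injectively onto an open convex set. -/
theorem small_balls_to_convex_images {n : ℕ}
    (Ω : Set (EuclideanSpace ℂ (Fin n))) (hΩopen : IsOpen Ω)
    (hΩ0 : (0 : EuclideanSpace ℂ (Fin n)) ∈ Ω)
    (F : EuclideanSpace ℂ (Fin n) → EuclideanSpace ℂ (Fin n))
    (hF : DifferentiableOn ℂ F Ω) (hF0 : F 0 = 0)
    (hDF : fderiv ℂ F 0 = ContinuousLinearMap.id ℂ (EuclideanSpace ℂ (Fin n))) :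
    ∃ ε₀ > (0:ℝ), ∀ ε : ℝ, 0 < ε → ε ≤ ε₀ →
      ball (0 : EuclideanSpace ℂ (Fin n)) ε ⊆ Ω ∧
      IsOpen (F '' ball (0 : EuclideanSpace ℂ (Fin n)) ε) ∧
      Convex ℝ (F '' ball (0 : EuclideanSpace ℂ (Fin n)) ε) ∧
      Set.InjOn F (ball (0 : EuclideanSpace ℂ (Fin n)) ε) := by
  classical
  -- choose a closed ball inside Ω
  obtain ⟨R₃, hR₃pos, hR₃Ω⟩ : ∃ r > 0, closedBall (0:EuclideanSpace ℂ (Fin n)) r ⊆ Ω :=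
    (Metric.nhds_basis_closedBall.mem_iff).1 (hΩopen.mem_nhds hΩ0)
  set R := R₃/3 with hR_def
  have hRpos : 0 < R := by positivity
  have h3R : ∀ u : EuclideanSpace ℂ (Fin n), ‖u‖ ≤ 3*R → u ∈ Ω := fun u hu => hR₃Ω (by
    rw [mem_closedBall, dist_zero_right]; rw [hR_def] at hu; linarith)
  have hdiffAt : ∀ u : EuclideanSpace ℂ (Fin n), u ∈ Ω → DifferentiableAt ℂ F u :=
    fun u hu => hF.differentiableAt (hΩopen.mem_nhds hu)
  -- bound for F on the closed ball of radius 3R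
  obtain ⟨K₀, hK₀⟩ := (isCompact_closedBall (0:EuclideanSpace ℂ (Fin n)) (3*R)).exists_bound_of_continuousOn
    (hF.continuousOn.mono (fun u hu => h3R u (by rwa [mem_closedBall, dist_zero_right] at hu)))
  set K := max K₀ 0 with hK_def
  have hKnn : 0 ≤ K := le_max_right _ _
  have hK : ∀ u : EuclideanSpace ℂ (Fin n), ‖u‖ ≤ 3*R → ‖F u‖ ≤ K := fun u hu =>
    le_trans (hK₀ u (by rwa [mem_closedBall, dist_zero_right])) (le_max_left _ _)
  clear_value K
  clear_value R
  -- line restrictions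
  have hline : ∀ (a w : EuclideanSpace ℂ (Fin n)) (z : ℂ), a + z • w ∈ Ω →
      HasDerivAt (fun z : ℂ => F (a + z • w)) (fderiv ℂ F (a + z • w) w) z := by
    intro a w z hz
    have h1 : HasDerivAt (fun z : ℂ => a + z • w) w z := by
      simpa using ((hasDerivAt_id z).smul_const w).const_add a
    have h2 : HasFDerivAt F (fderiv ℂ F (a + z • w)) (a + z • w) :=
      (hdiffAt _ hz).hasFDerivAt
    exact h2.comp_hasDerivAt z h1
  -- Stage 1 : bound on fderiv on the ball of radius 2R
  have hD1 : ∀ a : EuclideanSpace ℂ (Fin n), ‖a‖ ≤ 2*R → ‖fderiv ℂ F a‖ ≤ K/R := by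
    intro a ha
    refine opnorm_le_of_unit (by positivity) (fun w hw => ?_)
    have hmem : ∀ z : ℂ, ‖z‖ ≤ R → a + z • w ∈ Ω := by
      intro z hz
      refine h3R _ ?_
      calc ‖a + z • w‖ ≤ ‖a‖ + ‖z‖ * ‖w‖ := by rw [← norm_smul]; exact norm_add_le _ _
        _ ≤ 2*R + R * 1 := add_le_add ha
            (mul_le_mul hz (le_of_eq hw) (norm_nonneg _) hRpos.le)
        _ = 3*R := by ring
    have hψ : ∀ z ∈ closedBall (0:ℂ) R, DifferentiableAt ℂ (fun z : ℂ => F (a + z • w)) z :=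
      fun z hz =>
        (hline a w z (hmem z (by rwa [mem_closedBall, dist_zero_right] at hz))).differentiableAt
    have hder : deriv (fun z : ℂ => F (a + z • w)) 0 = fderiv ℂ F a w := by
      have h := (hline a w 0 (hmem 0 (by simp [hRpos.le]))).deriv
      simpa using h
    have hCb : ∀ z ∈ sphere (0:ℂ) R, ‖F (a + z • w)‖ ≤ K := by
      intro z hz
      rw [mem_sphere, dist_zero_right] at hz
      refine hK _ ?_
      calc ‖a + z • w‖ ≤ ‖a‖ + ‖z‖ * ‖w‖ := by rw [← norm_smul]; exact norm_add_le _ _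
        _ ≤ 2*R + R*1 := add_le_add ha (by rw [hz, hw])
        _ = 3*R := by ring
    have hfin := cauchy_bound_aux hRpos hψ hCb
    rwa [hder] at hfin
  -- Stage 2 : F is Lipschitz on the ball of radius 2R
  have hFLip : ∀ u v : EuclideanSpace ℂ (Fin n), ‖u‖ ≤ 2*R → ‖v‖ ≤ 2*R →
      ‖F u - F v‖ ≤ (K/R) * ‖u - v‖ := by
    intro u v hu hv
    exact Convex.norm_image_sub_le_of_norm_fderiv_le (s := closedBall (0:EuclideanSpace ℂ (Fin n)) (2*R))
      (fun x hx => hdiffAt x (h3R x (by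
        rw [mem_closedBall, dist_zero_right] at hx; linarith)))
      (fun x hx => hD1 x (by rwa [mem_closedBall, dist_zero_right] at hx))
      (convex_closedBall _ _)
      (by rwa [mem_closedBall, dist_zero_right]) (by rwa [mem_closedBall, dist_zero_right])
  -- Stage 3 : fderiv of F is Lipschitz on the ball of radius R
  have hDLip : ∀ a b : EuclideanSpace ℂ (Fin n), ‖a‖ ≤ R → ‖b‖ ≤ R →
      ‖fderiv ℂ F a - fderiv ℂ F b‖ ≤ (K/(R*R)) * ‖a - b‖ := by
    intro a b ha hb
    refine opnorm_le_of_unit (by positivity) (fun w hw => ?_)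
    have hmem : ∀ (u : EuclideanSpace ℂ (Fin n)), ‖u‖ ≤ R → ∀ z : ℂ, ‖z‖ ≤ R →
        u + z • w ∈ Ω := by
      intro u hu z hz
      refine h3R _ ?_
      calc ‖u + z • w‖ ≤ ‖u‖ + ‖z‖ * ‖w‖ := by rw [← norm_smul]; exact norm_add_le _ _
        _ ≤ R + R*1 := add_le_add hu (mul_le_mul hz (le_of_eq hw) (norm_nonneg _) hRpos.le)
        _ ≤ 3*R := by linarith
    have hψd : ∀ z ∈ closedBall (0:ℂ) R,
        DifferentiableAt ℂ (fun z : ℂ => F (a + z • w) - F (b + z • w)) z := by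
      intro z hz
      rw [mem_closedBall, dist_zero_right] at hz
      exact ((hline a w z (hmem a ha z hz)).sub (hline b w z (hmem b hb z hz))).differentiableAt
    have hder : deriv (fun z : ℂ => F (a + z • w) - F (b + z • w)) 0
        = fderiv ℂ F a w - fderiv ℂ F b w := by
      have h0 : ‖(0:ℂ)‖ ≤ R := by simp [hRpos.le]
      have h := ((hline a w 0 (hmem a ha 0 h0)).sub (hline b w 0 (hmem b hb 0 h0))).deriv
      simpa [Pi.sub_def] using h
    have hCb : ∀ z ∈ sphere (0:ℂ) R, ‖F (a + z • w) - F (b + z • w)‖ ≤ (K/R) * ‖a - b‖ := by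
      intro z hz
      rw [mem_sphere, dist_zero_right] at hz
      have h2 : ‖a + z • w‖ ≤ 2*R := by
        calc ‖a + z • w‖ ≤ ‖a‖ + ‖z‖ * ‖w‖ := by rw [← norm_smul]; exact norm_add_le _ _
          _ ≤ R + R*1 := add_le_add ha (by rw [hz, hw])
          _ = 2*R := by ring
      have h3 : ‖b + z • w‖ ≤ 2*R := by
        calc ‖b + z • w‖ ≤ ‖b‖ + ‖z‖ * ‖w‖ := by rw [← norm_smul]; exact norm_add_le _ _
          _ ≤ R + R*1 := add_le_add hb (by rw [hz, hw])
          _ = 2*R := by ring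
      have h4 := hFLip (a + z • w) (b + z • w) h2 h3
      rwa [show (a + z • w) - (b + z • w) = a - b by abel] at h4
    have hcb := cauchy_bound_aux hRpos hψd hCb
    rw [hder] at hcb
    have hq : ((K/R) * ‖a - b‖)/R = (K/(R*R)) * ‖a - b‖ := by
      field_simp
    rw [hq] at hcb
    rw [ContinuousLinearMap.sub_apply]
    exact hcb
  set M := K/(R*R) + 1 with hM_def
  have hM1 : 1 ≤ M := by
    have h0 : 0 ≤ K/(R*R) := by positivity
    rw [hM_def]
    linarith
  have hM0 : 0 ≤ M := by linarith
  clear_value M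
  have hDLipM : ∀ a b : EuclideanSpace ℂ (Fin n), ‖a‖ ≤ R → ‖b‖ ≤ R →
      ‖fderiv ℂ F a - fderiv ℂ F b‖ ≤ M * ‖a - b‖ := by
    intro a b ha hb
    refine (hDLip a b ha hb).trans ?_
    have h := norm_nonneg (a - b)
    have h2 : (K/(R*R)) * ‖a - b‖ + ‖a - b‖ = (K/(R*R) + 1) * ‖a - b‖ := by ring
    rw [hM_def]
    linarith [h, h2]
  have hDid : ∀ w : EuclideanSpace ℂ (Fin n), ‖w‖ ≤ R →
      ‖fderiv ℂ F w - ContinuousLinearMap.id ℂ (EuclideanSpace ℂ (Fin n))‖ ≤ M * ‖w‖ := by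
    intro w hw
    have h := hDLipM w 0 hw (by simp [hRpos.le])
    rw [hDF] at h
    rwa [sub_zero] at h
  have hMinv : 0 < 1/(16*M) := by
    have : (0:ℝ) < 16*M := by linarith
    positivity
  refine ⟨min R (1/(16*M)), lt_min hRpos hMinv, ?_⟩
  intro ε hεpos hεle
  have hεR : ε ≤ R := hεle.trans (min_le_left _ _)
  have hεM : M * ε ≤ 1/16 := by
    have h1 : ε ≤ 1/(16*M) := hεle.trans (min_le_right _ _)
    have h2 : 0 < M := by linarith
    calc M * ε ≤ M * (1/(16*M)) := mul_le_mul_of_nonneg_left h1 hM0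
      _ = 1/16 := by
          have hMne : M ≠ 0 := by linarith
          field_simp
  have hballΩ : ball (0:EuclideanSpace ℂ (Fin n)) ε ⊆ Ω := fun u hu => h3R u (by
    rw [mem_ball_zero_iff] at hu; linarith)
  have hballR : ∀ u : EuclideanSpace ℂ (Fin n), u ∈ ball (0:EuclideanSpace ℂ (Fin n)) ε →
      ‖u‖ ≤ R := fun u hu => by
    rw [mem_ball_zero_iff] at hu; linarith
  -- Taylor estimate
  have hTay : ∀ u ∈ ball (0:EuclideanSpace ℂ (Fin n)) ε, ∀ v ∈ ball (0:EuclideanSpace ℂ (Fin n)) ε,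
      ‖F u - F v - (fderiv ℂ F v) (u - v)‖ ≤ M * ‖u - v‖ * ‖u - v‖ := by
    intro u hu v hv
    have hsub : segment ℝ v u ⊆ closedBall (0:EuclideanSpace ℂ (Fin n)) R := by
      refine (convex_closedBall _ _).segment_subset ?_ ?_
      · rw [mem_closedBall, dist_zero_right]; exact hballR v hv
      · rw [mem_closedBall, dist_zero_right]; exact hballR u hu
    have hwR : ∀ w ∈ segment ℝ v u, ‖w‖ ≤ R := fun w hw => by
      have h := hsub hw; rwa [mem_closedBall, dist_zero_right] at h
    have hwv : ∀ w ∈ segment ℝ v u, ‖w - v‖ ≤ ‖u - v‖ := by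
      intro w hw
      obtain ⟨σ, τ, hσ, hτ, hστ, rfl⟩ := hw
      have hσ' : σ = 1 - τ := by linarith
      have he : σ • v + τ • u - v = τ • (u - v) := by rw [hσ']; module
      rw [he, norm_smul, Real.norm_eq_abs, abs_of_nonneg hτ]
      have h := norm_nonneg (u - v)
      nlinarith [h]
    have h := Convex.norm_image_sub_le_of_norm_hasFDerivWithin_le'
      (f := F) (f' := fun w => fderiv ℂ F w) (φ := fderiv ℂ F v) (C := M * ‖u - v‖)
      (s := segment ℝ v u)
      (fun w hw => (hdiffAt w (h3R w (by linarith [hwR w hw]))).hasFDerivAt.hasFDerivWithinAt)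
      (fun w hw => (hDLipM w v (hwR w hw) (hballR v hv)).trans
        (mul_le_mul_of_nonneg_left (hwv w hw) hM0))
      (convex_segment v u) (left_mem_segment ℝ v u) (right_mem_segment ℝ v u)
    calc ‖F u - F v - (fderiv ℂ F v) (u - v)‖ ≤ (M * ‖u - v‖) * ‖u - v‖ := h
      _ = M * ‖u - v‖ * ‖u - v‖ := by ring
  -- closeness to the identity
  have hDs : ∀ w ∈ ball (0:EuclideanSpace ℂ (Fin n)) ε,
      ‖fderiv ℂ F w - ContinuousLinearMap.id ℂ (EuclideanSpace ℂ (Fin n))‖ ≤ M * ε := by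
    intro w hw
    refine (hDid w (hballR w hw)).trans ?_
    have h := (mem_ball_zero_iff.1 hw).le
    exact mul_le_mul_of_nonneg_left h hM0
  have happrox : ∀ u ∈ ball (0:EuclideanSpace ℂ (Fin n)) ε,
      ∀ v ∈ ball (0:EuclideanSpace ℂ (Fin n)) ε,
      ‖F u - F v - (u - v)‖ ≤ (M * ε) * ‖u - v‖ := by
    intro u hu v hv
    have h := Convex.norm_image_sub_le_of_norm_hasFDerivWithin_le'
      (f := F) (f' := fun w => fderiv ℂ F w)
      (φ := ContinuousLinearMap.id ℂ (EuclideanSpace ℂ (Fin n))) (C := M * ε)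
      (s := ball (0:EuclideanSpace ℂ (Fin n)) ε)
      (fun w hw => (hdiffAt w (hballΩ hw)).hasFDerivAt.hasFDerivWithinAt)
      (fun w hw => hDs w hw) (convex_ball _ _) hv hu
    simpa using h
  -- injectivity
  have hinj : Set.InjOn F (ball (0:EuclideanSpace ℂ (Fin n)) ε) := by
    intro u hu v hv huv
    have h := happrox u hu v hv
    rw [huv, sub_self, zero_sub, norm_neg] at h
    have h2 : (M*ε) * ‖u - v‖ ≤ (1/16) * ‖u - v‖ :=
      mul_le_mul_of_nonneg_right hεM (norm_nonneg _)
    have h3 : ‖u - v‖ = 0 := by linarith [norm_nonneg (u - v)]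
    exact sub_eq_zero.1 (norm_eq_zero.1 h3)
  -- approximates linear on
  have hAL : ApproximatesLinearOn F (ContinuousLinearMap.id ℂ (EuclideanSpace ℂ (Fin n)))
      (ball (0:EuclideanSpace ℂ (Fin n)) ε) (1/2 : NNReal) := by
    intro u hu v hv
    have h := happrox u hu v hv
    have h2 : (M*ε) * ‖u - v‖ ≤ (1/2) * ‖u - v‖ :=
      mul_le_mul_of_nonneg_right (by linarith) (norm_nonneg _)
    calc ‖F u - F v - (ContinuousLinearMap.id ℂ (EuclideanSpace ℂ (Fin n))) (u - v)‖
        = ‖F u - F v - (u - v)‖ := by simp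
      _ ≤ (M*ε) * ‖u - v‖ := h
      _ ≤ (1/2) * ‖u - v‖ := h2
      _ = ((1/2 : NNReal) : ℝ) * ‖u - v‖ := by norm_num
  have hopen : ∀ ε' : ℝ, 0 < ε' → ε' ≤ ε →
      IsOpen (F '' ball (0:EuclideanSpace ℂ (Fin n)) ε') := by
    intro ε' hε'pos hε'le
    refine (hAL.mono_set (ball_subset_ball hε'le)).open_image
      ⟨fun y => y, 1, fun y => by simp, fun y => rfl⟩ isOpen_ball (Or.inr ?_)
    show (1/2 : NNReal) < (1:NNReal)⁻¹
    rw [inv_one]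
    exact NNReal.coe_lt_coe.1 (by norm_num)
  -- convexity
  have hconv : Convex ℝ (F '' ball (0:EuclideanSpace ℂ (Fin n)) ε) := by
    intro a ha b hb s t hs ht hst
    obtain ⟨x, hx, rfl⟩ := ha
    obtain ⟨y, hy, rfl⟩ := hb
    have hseq : s = 1 - t := by linarith
    rw [hseq]
    set ρ := (max ‖x‖ ‖y‖ + ε)/2 with hρ_def
    have hxε := mem_ball_zero_iff.1 hx
    have hyε := mem_ball_zero_iff.1 hy
    have hmaxε : max ‖x‖ ‖y‖ < ε := max_lt hxε hyε
    have hmax0 : 0 ≤ max ‖x‖ ‖y‖ := le_trans (norm_nonneg x) (le_max_left _ _)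
    have hρpos : 0 < ρ := by rw [hρ_def]; linarith
    have hρε : ρ < ε := by rw [hρ_def]; linarith
    have hmaxρ : max ‖x‖ ‖y‖ < ρ := by rw [hρ_def]; linarith
    set c : ℝ → EuclideanSpace ℂ (Fin n) := fun τ => (1-τ) • F x + τ • F y with hc_def
    have hcont : Continuous c := by
      rw [hc_def]; fun_prop
    have hKEρ : ∀ τ : ℝ, 0 ≤ τ → τ ≤ 1 →
        ∀ z ∈ closedBall (0:EuclideanSpace ℂ (Fin n)) ρ, F z = c τ →
        z ∈ ball (0:EuclideanSpace ℂ (Fin n)) ρ := by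
      intro τ h0 h1 z hz hFz
      have hzε : z ∈ ball (0:EuclideanSpace ℂ (Fin n)) ε := by
        rw [mem_closedBall, dist_zero_right] at hz
        rw [mem_ball_zero_iff]; linarith
      have hKE := key_estimate (D := fun w => fderiv ℂ F w) hM1 hεM hTay hDs happrox
        hx hy hzε h0 h1 hFz
      rw [mem_ball_zero_iff]
      exact lt_of_le_of_lt hKE hmaxρ
    haveI : PreconnectedSpace ↥(Set.Icc (0:ℝ) 1) := Subtype.preconnectedSpace isPreconnected_Icc
    set B : Set ↥(Set.Icc (0:ℝ) 1) :=
      {τ | c ↑τ ∈ F '' ball (0:EuclideanSpace ℂ (Fin n)) ρ} with hB_def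
    have hBeq : B = {τ : ↥(Set.Icc (0:ℝ) 1) |
        c ↑τ ∈ F '' closedBall (0:EuclideanSpace ℂ (Fin n)) ρ} := by
      apply Set.Subset.antisymm
      · intro τ hτ
        exact Set.image_mono (f := F) ball_subset_closedBall hτ
      · intro τ hτ
        obtain ⟨z, hz, hFz⟩ := hτ
        exact ⟨z, hKEρ ↑τ τ.2.1 τ.2.2 z hz hFz, hFz⟩
    have hBopen : IsOpen B :=
      (hopen ρ hρpos hρε.le).preimage (hcont.comp continuous_subtype_val)
    have hBclosed : IsClosed B := by
      rw [hBeq]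
      refine IsClosed.preimage (hcont.comp continuous_subtype_val) ?_
      exact ((isCompact_closedBall (0:EuclideanSpace ℂ (Fin n)) ρ).image_of_continuousOn
        (hF.continuousOn.mono (fun u hu => h3R u (by
          rw [mem_closedBall, dist_zero_right] at hu; linarith)))).isClosed
    have hB0 : (⟨0, ⟨le_refl 0, zero_le_one⟩⟩ : ↥(Set.Icc (0:ℝ) 1)) ∈ B := by
      refine ⟨x, ?_, ?_⟩
      · rw [mem_ball_zero_iff]; exact lt_of_le_of_lt (le_max_left _ _) hmaxρ
      · rw [hc_def]; simp
    have hBuniv : B = Set.univ := IsClopen.eq_univ ⟨hBclosed, hBopen⟩ ⟨_, hB0⟩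
    have ht1 : t ∈ Set.Icc (0:ℝ) 1 := ⟨ht, by linarith⟩
    have hmem : (⟨t, ht1⟩ : ↥(Set.Icc (0:ℝ) 1)) ∈ B := by rw [hBuniv]; trivial
    obtain ⟨z, hz, hFz⟩ := hmem
    exact ⟨z, ball_subset_ball hρε.le hz, hFz⟩
  exact ⟨hballΩ, hopen ε hεpos le_rfl, hconv, hinj⟩
end
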